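/- Suppose A has enough injectives and for every injective object I of A there exists an (F,I)-Eilenberg–MacLane object. Call a map f : X• → Y• of cosimplicial objects of T an F-injective equivalence if for every F-injective object G of T and every s ≥ 0 the induced map π_s Hom_T(Y•, G) → π_s Hom_T(X•, G) is an isomorphism. Then f is an F-injective equivalence if and only if for every s ≥ 0 the induced map H^s(F X•) → H^s(F Y•) is an isomorphism in A, i.e. if and only if f induces a quasi-isomorphism of the cochain complexes associated to F X• and F Y•. -/

import Mathlib

open CategoryTheory Limits Pretriangulated

universe w v u v' u'

variable {T : Type u} [Category.{v} T] [HasZeroObject T] [HasShift T ℤ]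
  [Preadditive T] [∀ n : ℤ, (CategoryTheory.shiftFunctor T n).Additive] [Pretriangulated T]
variable {A : Type u'} [Category.{v'} A] [Abelian A]

/-- `E` is an `(F,I)`-Eilenberg–MacLane object: there is an isomorphism
`Hom_T(X, E) ≅ Hom_A(F X, I)` natural in `X` such that the canonical map `F E ⟶ I`
(the image of the identity of `E`) is an isomorphism. -/
def IsEMObject (F : T ⥤ A) (I : A) (E : T) : Prop :=
  ∃ e : ∀ X : T, (X ⟶ E) ≃ (F.obj X ⟶ I),
    (∀ ⦃X Y : T⦄ (f : X ⟶ Y) (g : Y ⟶ E), e X (f ≫ g) = F.map f ≫ e Y g) ∧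
    IsIso (e E (𝟙 E))

/-- An object of `T` is `F`-injective if it is an `(F,I)`-Eilenberg–MacLane object for
some injective object `I` of `A`. -/
def FInjective (F : T ⥤ A) (E : T) : Prop :=
  ∃ I : A, Injective I ∧ IsEMObject F I E

/-- A map `i : A₀ ⟶ B₀` in `T` is `F`-monic if `Hom_T(B₀, G) → Hom_T(A₀, G)` is surjective
for every `F`-injective object `G`. -/
def FMonic (F : T ⥤ A) {A₀ B₀ : T} (i : A₀ ⟶ B₀) : Prop :=
  ∀ G : T, FInjective F G → Function.Surjective (fun g : B₀ ⟶ G => i ≫ g)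

open AlgebraicTopology

namespace EMhelp

open AlgebraicTopology HomologicalComplex

universe w₂ w₁

/-- The universe-lift functor on `AddCommGrpCat`. -/
def addULift : AddCommGrpCat.{w₁} ⥤ AddCommGrpCat.{max w₁ w₂} where
  obj M := AddCommGrpCat.of (ULift.{w₂} M)
  map f := AddCommGrpCat.ofHom
    ((AddEquiv.ulift.symm.toAddMonoidHom.comp f.hom).comp AddEquiv.ulift.toAddMonoidHom)
  map_id _ := by ext; rfl
  map_comp _ _ := by ext; rfl

instance : addULift.{w₂, w₁}.Additive where
  map_add := by intros; ext; rfl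

lemma isIso_addULift_map_iff {M N : AddCommGrpCat.{w₁}} (f : M ⟶ N) :
    IsIso (addULift.{w₂}.map f) ↔ IsIso f := by
  rw [ConcreteCategory.isIso_iff_bijective, ConcreteCategory.isIso_iff_bijective]
  constructor
  · intro h
    have heq : (f : M → N) = (Equiv.ulift) ∘ (addULift.{w₂}.map f) ∘ (Equiv.ulift.symm) := by
      funext x; rfl
    show Function.Bijective (f : M → N)
    rw [heq]
    exact (Equiv.ulift.bijective.comp h).comp Equiv.ulift.symm.bijective
  · intro h
    have heq : ((addULift.{w₂}.map f) : ULift M → ULift N)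
        = (Equiv.ulift.symm) ∘ (f : M → N) ∘ (Equiv.ulift) := by funext x; rfl
    show Function.Bijective (addULift.{w₂}.map f : ULift M → ULift N)
    rw [heq]
    exact (Equiv.ulift.symm.bijective.comp h).comp Equiv.ulift.bijective

instance : addULift.{w₂, w₁}.PreservesHomology := by
  apply Functor.preservesHomology_of_map_exact
  intro S hS
  rw [ShortComplex.ab_exact_iff] at hS ⊢
  intro x₂ hx₂
  obtain ⟨x₁, hx₁⟩ := hS x₂.down (congrArg ULift.down hx₂)
  exact ⟨⟨x₁⟩, congrArg ULift.up hx₁⟩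

instance preservesHomology_preadditiveYoneda_obj {A : Type u'} [Category.{v'} A] [Abelian A]
    (I : A) [Injective I] : (preadditiveYoneda.obj I).PreservesHomology := by
  have := (Injective.injective_iff_preservesEpimorphisms_preadditiveYoneda_obj I).mp ‹_›
  apply Functor.preservesHomology_of_preservesEpis_and_kernels

instance preservesHomology_yonedaULift {A : Type u'} [Category.{v'} A] [Abelian A]
    (I : A) [Injective I] :
    (preadditiveYoneda.obj I ⋙ addULift.{w₂, v'}).PreservesHomology := by
  apply Functor.preservesHomology_of_map_exact
  intro S hS
  exact (hS.map (preadditiveYoneda.obj I)).map addULift.{w₂, v'}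

lemma isIso_iff_of_comm {C : Type*} [Category C] {P Q P' Q' : C}
    (e1 : P ≅ P') (e2 : Q ≅ Q') {a : P ⟶ Q} {b : P' ⟶ Q'}
    (h : a ≫ e2.hom = e1.hom ≫ b) : IsIso a ↔ IsIso b := by
  constructor
  · intro
    have hb : b = e1.inv ≫ a ≫ e2.hom := by rw [h, Iso.inv_hom_id_assoc]
    rw [hb]; infer_instance
  · intro
    have ha : a = e1.hom ≫ b ≫ e2.inv := by
      rw [← Category.assoc, ← h, Category.assoc, Iso.hom_inv_id, Category.comp_id]
    rw [ha]; infer_instance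

lemma isIso_of_injective_detect {A : Type u'} [Category.{v'} A] [Abelian A]
    [EnoughInjectives A] {M N : A} (u : M ⟶ N)
    (h : ∀ I : A, Injective I → Function.Bijective (fun g : N ⟶ I => u ≫ g)) :
    IsIso u := by
  have hmono : Mono u := by
    obtain ⟨g, hg⟩ := (h (Injective.under M) inferInstance).2 (Injective.ι M)
    refine Preadditive.mono_of_cancel_zero _ (fun {W} ht hht => ?_)
    have : ht ≫ Injective.ι M = 0 := by
      rw [← hg]
      simp only [← Category.assoc, hht]
      simp
    exact zero_of_comp_mono (Injective.ι M) this
  have hepi : Epi u := by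
    refine Preadditive.epi_of_cancel_zero _ (fun {Z} g hg => ?_)
    have h0 : u ≫ (g ≫ Injective.ι Z) = u ≫ 0 := by
      rw [← Category.assoc, hg]
      simp
    have := (h (Injective.under Z) inferInstance).1 h0
    exact zero_of_comp_mono (Injective.ι Z) this
  exact isIso_of_mono_of_epi u

lemma isIso_homologyMap_mapHC_iff {C D : Type*} [Category C] [Category D] [Abelian C] [Abelian D]
    {ι : Type*} {c : ComplexShape ι} (F : C ⥤ D) [F.Additive] [F.PreservesHomology]
    {K L : HomologicalComplex C c} (ψ : K ⟶ L) (i : ι) :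
    IsIso (HomologicalComplex.homologyMap ((F.mapHomologicalComplex c).map ψ) i) ↔
      IsIso (F.map (HomologicalComplex.homologyMap ψ i)) := by
  have h := ShortComplex.mapHomologyIso_hom_naturality
    ((HomologicalComplex.shortComplexFunctor C c i).map ψ) F
  exact isIso_iff_of_comm _ _ h

lemma isIso_homologyMap_of_square {C : Type*} [Category C] [Abelian C]
    {ι : Type*} {c : ComplexShape ι} {K L K' L' : HomologicalComplex C c}
    (e1 : K ≅ K') (e2 : L ≅ L') {a : K ⟶ L} {b : K' ⟶ L'}
    (h : a ≫ e2.hom = e1.hom ≫ b) (s : ι) :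
    IsIso (homologyMap a s) ↔ IsIso (homologyMap b s) := by
  refine isIso_iff_of_comm ((homologyFunctor C c s).mapIso e1)
    ((homologyFunctor C c s).mapIso e2) ?_
  show homologyMap a s ≫ homologyMap e2.hom s = homologyMap e1.hom s ≫ homologyMap b s
  rw [← homologyMap_comp, ← homologyMap_comp, h]

lemma isIso_homologyMap_of_eqToHom {C : Type*} [Category C] [Abelian C]
    {ι : Type*} {c : ComplexShape ι} {K L K' L' : HomologicalComplex C c}
    (h1 : K = K') (h2 : L' = L) {a : K ⟶ L} {b : K' ⟶ L'}
    (h : a = eqToHom h1 ≫ b ≫ eqToHom h2) (s : ι) :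
    IsIso (homologyMap a s) ↔ IsIso (homologyMap b s) := by
  subst h1 h2
  simp only [eqToHom_refl, Category.id_comp, Category.comp_id] at h
  rw [h]

end EMhelp
namespace EMhelp

open AlgebraicTopology HomologicalComplex

section
variable {A : Type u'} [Category.{v'} A] [Preadditive A]

lemma coface_d (S : CosimplicialObject A) (j : ℕ) :
    ((alternatingCofaceMapComplex A).obj S).d j (j + 1) =
      AlternatingCofaceMapComplex.objD S j :=
  by simp [alternatingCofaceMapComplex, AlternatingCofaceMapComplex.obj]

/-- the face complex of `S.op` is the `op` of the coface complex of `S` -/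
noncomputable def isoOpFace (S : CosimplicialObject A) :
    (alternatingFaceMapComplex Aᵒᵖ).obj S.op ≅
      (((alternatingCofaceMapComplex A).obj S).op :
        HomologicalComplex Aᵒᵖ ((ComplexShape.up ℕ).symm)) :=
  HomologicalComplex.Hom.isoOfComponents (fun _ => Iso.refl _) (by
    rintro i j (rfl : j + 1 = i)
    simp only [Iso.refl_hom, Category.id_comp, Category.comp_id,
      alternatingFaceMapComplex_obj_d]
    refine (Category.id_comp _).trans ((?_ : _ = _).trans (Category.comp_id _).symm)
    show (((alternatingCofaceMapComplex A).obj S).d j (j + 1)).op =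
      AlternatingFaceMapComplex.objD S.op j
    rw [coface_d]
    dsimp [AlternatingFaceMapComplex.objD, AlternatingCofaceMapComplex.objD]
    refine (op_sum _ _ _ _).trans ?_
    exact Finset.sum_congr rfl fun x _ => by exact (op_zsmul _ _ _).trans rfl)

lemma isoOpFace_natural {S S' : CosimplicialObject A} (g : S ⟶ S') :
    (alternatingFaceMapComplex Aᵒᵖ).map (NatTrans.op g) ≫ (isoOpFace S).hom =
      (isoOpFace S').hom ≫
        (HomologicalComplex.opFunctor A (ComplexShape.up ℕ)).map
          ((alternatingCofaceMapComplex A).map g).op := by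
  ext n
  simp [isoOpFace]
  exact (Category.comp_id _).trans (Category.id_comp _).symm

end

section
variable {T : Type u} [Category.{v} T] [Preadditive T]
variable {A : Type u'} [Category.{v'} A] [Abelian A]

/-- the natural isomorphism of `AddCommGrpCat`-valued functors coming from
Eilenberg-MacLane data -/
noncomputable def emNatIso (F : T ⥤ A) [F.Additive] {I : A} {E : T}
    (e : ∀ W : T, (W ⟶ E) ≃ (F.obj W ⟶ I))
    (he : ∀ ⦃W W' : T⦄ (f : W ⟶ W') (g : W' ⟶ E), e W (f ≫ g) = F.map f ≫ e W' g) :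
    preadditiveYoneda.obj E ⋙ addULift.{v', v} ≅
      F.op ⋙ (preadditiveYoneda.obj I ⋙ addULift.{v, v'}) := by
  have key : ∀ (W : T) (k : W ⟶ E), e W k = F.map k ≫ e E (𝟙 E) := fun W k => by
    conv_lhs => rw [← Category.comp_id k]
    rw [he]
  exact NatIso.ofComponents
    (fun W => (AddEquiv.mk'
        (Equiv.ulift.trans ((e W.unop).trans Equiv.ulift.symm))
        (fun g h => by
          apply ULift.ext
          show e W.unop (g.down + h.down) = e W.unop g.down + e W.unop h.down
          rw [key _ (g.down + h.down), key _ g.down, key _ h.down, F.map_add, Preadditive.add_comp])).toAddCommGrpIso)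
    (fun {W W'} h => by
      ext g
      apply ULift.ext
      show e W'.unop (h.unop ≫ g.down) = F.map h.unop ≫ e W.unop g.down
      exact he h.unop g.down)

end
end EMhelp
namespace EMhelp
section
open AlgebraicTopology HomologicalComplex

variable {T : Type u} [Category.{v} T] [Preadditive T]
variable {A : Type u'} [Category.{v'} A] [Abelian A]

lemma core (F : T ⥤ A) [F.Additive] (I : A) [Injective I] (E : T)
    (e : ∀ W : T, (W ⟶ E) ≃ (F.obj W ⟶ I))
    (he : ∀ ⦃W W' : T⦄ (f : W ⟶ W') (g : W' ⟶ E), e W (f ≫ g) = F.map f ≫ e W' g)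
    (X Y : CosimplicialObject T) (f : X ⟶ Y) (s : ℕ) :
    IsIso (homologyMap ((alternatingFaceMapComplex AddCommGrpCat).map
        (CategoryTheory.Functor.whiskerRight (NatTrans.op f) (preadditiveYoneda.obj E))) s) ↔
      IsIso ((preadditiveYoneda.obj I).map
        ((homologyMap ((alternatingCofaceMapComplex A).map
          (CategoryTheory.Functor.whiskerRight f F)) s).op)) := by
  have η := emNatIso F e he
  have step1 :
      IsIso (homologyMap ((alternatingFaceMapComplex AddCommGrpCat).map
        (CategoryTheory.Functor.whiskerRight (NatTrans.op f) (preadditiveYoneda.obj E))) s) ↔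
      IsIso (homologyMap ((addULift.{v', v}.mapHomologicalComplex _).map
        ((alternatingFaceMapComplex AddCommGrpCat).map
          (CategoryTheory.Functor.whiskerRight (NatTrans.op f) (preadditiveYoneda.obj E)))) s) :=
    ((isIso_homologyMap_mapHC_iff addULift.{v', v} _ s).trans
      (isIso_addULift_map_iff _)).symm
  have eq2 := Functor.congr_hom (map_alternatingFaceMapComplex addULift.{v', v})
    (CategoryTheory.Functor.whiskerRight (NatTrans.op f) (preadditiveYoneda.obj E))
  have step2 :
      IsIso (homologyMap ((addULift.{v', v}.mapHomologicalComplex _).map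
        ((alternatingFaceMapComplex AddCommGrpCat).map
          (CategoryTheory.Functor.whiskerRight (NatTrans.op f) (preadditiveYoneda.obj E)))) s) ↔
      IsIso (homologyMap ((alternatingFaceMapComplex AddCommGrpCat).map
        (CategoryTheory.Functor.whiskerRight
          (CategoryTheory.Functor.whiskerRight (NatTrans.op f) (preadditiveYoneda.obj E))
          addULift.{v', v})) s) :=
    isIso_homologyMap_of_eqToHom _ _ eq2 s
  have sq3 : CategoryTheory.Functor.whiskerRight
        (CategoryTheory.Functor.whiskerRight (NatTrans.op f) (preadditiveYoneda.obj E))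
        addULift.{v', v} ≫ (Functor.isoWhiskerLeft X.op η).hom =
      (Functor.isoWhiskerLeft Y.op η).hom ≫ CategoryTheory.Functor.whiskerRight (NatTrans.op f)
        (F.op ⋙ (preadditiveYoneda.obj I ⋙ addULift.{v, v'})) := by
    ext n : 1
    exact η.hom.naturality ((NatTrans.op f).app n)
  have step3 :
      IsIso (homologyMap ((alternatingFaceMapComplex AddCommGrpCat).map
        (CategoryTheory.Functor.whiskerRight
          (CategoryTheory.Functor.whiskerRight (NatTrans.op f) (preadditiveYoneda.obj E))
          addULift.{v', v})) s) ↔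
      IsIso (homologyMap ((alternatingFaceMapComplex AddCommGrpCat).map
        (CategoryTheory.Functor.whiskerRight (NatTrans.op f)
          (F.op ⋙ (preadditiveYoneda.obj I ⋙ addULift.{v, v'})))) s) :=
    isIso_homologyMap_of_square
      ((alternatingFaceMapComplex AddCommGrpCat).mapIso (Functor.isoWhiskerLeft Y.op η))
      ((alternatingFaceMapComplex AddCommGrpCat).mapIso (Functor.isoWhiskerLeft X.op η))
      (by dsimp only [Functor.mapIso_hom]
          rw [← Functor.map_comp, ← Functor.map_comp, sq3]) s
  have eq4 : CategoryTheory.Functor.whiskerRight (NatTrans.op f)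
        (F.op ⋙ (preadditiveYoneda.obj I ⋙ addULift.{v, v'})) =
      CategoryTheory.Functor.whiskerRight (NatTrans.op (CategoryTheory.Functor.whiskerRight f F))
        (preadditiveYoneda.obj I ⋙ addULift.{v, v'}) := rfl
  have eq5 := Functor.congr_hom
    (map_alternatingFaceMapComplex (C := Aᵒᵖ) (preadditiveYoneda.obj I ⋙ addULift.{v, v'}))
    (NatTrans.op (CategoryTheory.Functor.whiskerRight f F))
  have step5 :
      IsIso (homologyMap ((alternatingFaceMapComplex AddCommGrpCat).map
        (CategoryTheory.Functor.whiskerRight (NatTrans.op (CategoryTheory.Functor.whiskerRight f F))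
          (preadditiveYoneda.obj I ⋙ addULift.{v, v'}))) s) ↔
      IsIso (homologyMap
        (((preadditiveYoneda.obj I ⋙ addULift.{v, v'}).mapHomologicalComplex _).map
          ((alternatingFaceMapComplex Aᵒᵖ).map
            (NatTrans.op (CategoryTheory.Functor.whiskerRight f F)))) s) :=
    (isIso_homologyMap_of_eqToHom _ _ eq5 s).symm
  have step6 :
      IsIso (homologyMap
        (((preadditiveYoneda.obj I ⋙ addULift.{v, v'}).mapHomologicalComplex _).map
          ((alternatingFaceMapComplex Aᵒᵖ).map
            (NatTrans.op (CategoryTheory.Functor.whiskerRight f F)))) s) ↔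
      IsIso (homologyMap
        (((preadditiveYoneda.obj I ⋙ addULift.{v, v'}).mapHomologicalComplex _).map
          ((HomologicalComplex.opFunctor A (ComplexShape.up ℕ)).map
            ((alternatingCofaceMapComplex A).map (CategoryTheory.Functor.whiskerRight f F)).op)) s) :=
    isIso_homologyMap_of_square
      (((preadditiveYoneda.obj I ⋙ addULift.{v, v'}).mapHomologicalComplex _).mapIso
        (isoOpFace (Y ⋙ F)))
      (((preadditiveYoneda.obj I ⋙ addULift.{v, v'}).mapHomologicalComplex _).mapIso
        (isoOpFace (X ⋙ F)))
      ((Functor.map_comp _ _ _).symm.trans ((congrArg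
            (((preadditiveYoneda.obj I ⋙ addULift.{v, v'}).mapHomologicalComplex
              (ComplexShape.down ℕ)).map)
            (isoOpFace_natural (CategoryTheory.Functor.whiskerRight f F))).trans
            (Functor.map_comp _ _ _))) s
  have step7 := isIso_homologyMap_mapHC_iff (c := ComplexShape.down ℕ)
    (preadditiveYoneda.obj I ⋙ addULift.{v, v'})
    ((HomologicalComplex.opFunctor A (ComplexShape.up ℕ)).map
      ((alternatingCofaceMapComplex A).map (CategoryTheory.Functor.whiskerRight f F)).op) s
  have step8 := isIso_addULift_map_iff.{v} ((preadditiveYoneda.obj I).map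
    (homologyMap ((HomologicalComplex.opFunctor A (ComplexShape.up ℕ)).map
      ((alternatingCofaceMapComplex A).map (CategoryTheory.Functor.whiskerRight f F)).op) s))
  have step9 :
      IsIso ((preadditiveYoneda.obj I).map
        (homologyMap ((HomologicalComplex.opFunctor A (ComplexShape.up ℕ)).map
          ((alternatingCofaceMapComplex A).map (CategoryTheory.Functor.whiskerRight f F)).op) s)) ↔
      IsIso ((preadditiveYoneda.obj I).map
        ((homologyMap ((alternatingCofaceMapComplex A).map
          (CategoryTheory.Functor.whiskerRight f F)) s).op)) :=
    isIso_iff_of_comm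
      ((preadditiveYoneda.obj I).mapIso
        (((alternatingCofaceMapComplex A).obj (Y ⋙ F)).homologyOp s))
      ((preadditiveYoneda.obj I).mapIso
        (((alternatingCofaceMapComplex A).obj (X ⋙ F)).homologyOp s))
      ((Functor.map_comp _ _ _).symm.trans ((congrArg (preadditiveYoneda.obj I).map
            (HomologicalComplex.homologyOp_hom_naturality _ _)).trans (Functor.map_comp _ _ _)))
  rw [eq4] at step3
  exact step1.trans (step2.trans (step3.trans (step5.trans (step6.trans
    (step7.trans (step8.trans step9))))))

end
end EMhelp

/-- A map `f : X• ⟶ Y•` of cosimplicial objects of `T` is an `F`-injective equivalence if and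
only if it induces isomorphisms `H^s(F X•) → H^s(F Y•)` for all `s ≥ 0`, i.e. a
quasi-isomorphism of the associated cochain complexes. Here the `F`-injective equivalences
are the maps inducing isomorphisms on `π_s Hom_T(-, G)` for all `F`-injective `G` and all
`s ≥ 0`, where `π_s` is the `s`-th homology of the Moore chain complex of the simplicial
abelian group `[n] ↦ Hom_T(Xⁿ, G)`, and `H^s` is taken with respect to the alternating sum
of the coface maps. -/
theorem fInjectiveEquivalence_iff_quasiIso [EnoughInjectives A]
    (F : T ⥤ A) [F.Additive] [F.IsHomological]
    (SA : A ≌ A) (comm : CategoryTheory.shiftFunctor T (1 : ℤ) ⋙ F ≅ F ⋙ SA.functor)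
    (hEM : ∀ I : A, Injective I → ∃ E : T, IsEMObject F I E)
    (X Y : CosimplicialObject T) (f : X ⟶ Y) :
    (∀ G : T, FInjective F G → ∀ s : ℕ,
        IsIso (HomologicalComplex.homologyMap
          ((alternatingFaceMapComplex AddCommGrpCat).map
            (CategoryTheory.Functor.whiskerRight (NatTrans.op f) (preadditiveYoneda.obj G))) s)) ↔
      (∀ s : ℕ,
        IsIso (HomologicalComplex.homologyMap
          ((alternatingCofaceMapComplex A).map (CategoryTheory.Functor.whiskerRight f F)) s)) := by
  constructor
  · intro h s
    apply EMhelp.isIso_of_injective_detect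
    intro I hI
    obtain ⟨E, e, he, hiso⟩ := hEM I hI
    have : Injective I := hI
    have h2 := (EMhelp.core F I E e he X Y f s).mp (h E ⟨I, hI, e, he, hiso⟩ s)
    rw [ConcreteCategory.isIso_iff_bijective] at h2
    exact h2
  · intro h G hG s
    obtain ⟨I, hI, e, he, hiso⟩ := hG
    have : Injective I := hI
    refine (EMhelp.core F I G e he X Y f s).mpr ?_
    have h1 := h s
    have h2 := (isIso_op_iff (HomologicalComplex.homologyMap
      ((alternatingCofaceMapComplex A).map (CategoryTheory.Functor.whiskerRight f F)) s)).mpr h1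
    infer_instance
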